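/- arXiv:2111.02355 — 5 statements merged into one kernel-verified Lean document; each statement's English description precedes it below -/
import Mathlib

section
/- Let (X, Y) be jointly distributed random variables with X = (X_1,...,X_d) taking finitely many values, each with strictly positive probability. If S_1 and S_2 are subsets of the coordinates of X such that E[Y | S_1] = E[Y | X] almost surely and E[Y | S_2] = E[Y | X] almost surely, then E[Y | S_1 ∩ S_2] = E[Y | X] almost surely. -/
open MeasureTheory

/-- The sigma-algebra generated by the coordinates of `X` indexed by `S`. -/
def coordSigma {Ω : Type*} {d : ℕ} {α : Fin d → Type*}
    [∀ i, MeasurableSpace (α i)] (X : ∀ i, Ω → α i) (S : Set (Fin d)) :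
    MeasurableSpace Ω :=
  MeasurableSpace.comap (fun ω => fun i : S => X i ω) MeasurableSpace.pi

/-- Intersection property for stable variable sets under strictly positive density. -/
theorem stmt0 {Ω : Type*} [MeasurableSpace Ω] (μ : Measure Ω) [IsProbabilityMeasure μ]
    {d : ℕ} {α : Fin d → Type*} [∀ i, Fintype (α i)] [∀ i, MeasurableSpace (α i)]
    [∀ i, MeasurableSingletonClass (α i)]
    (X : ∀ i, Ω → α i) (hX : ∀ i, Measurable (X i))
    (Y : Ω → ℝ) (hYm : Measurable Y) (hY : Integrable Y μ)
    (hpos : ∀ x : ∀ i, α i, μ {ω | ∀ i, X i ω = x i} ≠ 0)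
    (S₁ S₂ : Set (Fin d))
    (h₁ : μ[Y | coordSigma X S₁] =ᵐ[μ] μ[Y | coordSigma X Set.univ])
    (h₂ : μ[Y | coordSigma X S₂] =ᵐ[μ] μ[Y | coordSigma X Set.univ]) :
    μ[Y | coordSigma X (S₁ ∩ S₂)] =ᵐ[μ] μ[Y | coordSigma X Set.univ] := by
  classical
  -- all sets in the restricted products are measurable
  have hTop : ∀ (S : Set (Fin d)) (s : Set (∀ i : S, α i)), MeasurableSet s := by
    intro S s
    exact s.toFinite.measurableSet
  -- the coordinate maps are measurable, hence all coordSigmas are ≤ ambient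
  have hT : ∀ (S : Set (Fin d)), Measurable (fun ω => fun i : S => X i ω) := fun S =>
    measurable_pi_lambda _ (fun i => hX i)
  have hle : ∀ S : Set (Fin d), coordSigma X S ≤ ‹MeasurableSpace Ω› := fun S =>
    (hT S).comap_le
  -- a coordSigma-measurable function is constant on the corresponding fibers
  have hconst : ∀ (S : Set (Fin d)) (g : Ω → ℝ), Measurable[coordSigma X S] g →
      ∀ ω ω', (∀ i ∈ S, X i ω = X i ω') → g ω = g ω' := by
    intro S g hg ω ω' hXe
    obtain ⟨C, -, hC⟩ := hg (measurableSet_singleton (g ω))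
    have hmem : ω ∈ (fun ω => fun i : S => X i ω) ⁻¹' C := by
      rw [hC]; exact rfl
    have hTeq : (fun i : S => X i ω) = fun i : S => X i ω' :=
      funext fun i => hXe i i.2
    have hmem' : ω' ∈ (fun ω => fun i : S => X i ω) ⁻¹' C := by
      simpa [Set.mem_preimage, ← hTeq] using hmem
    rw [hC] at hmem'
    exact hmem'.symm
  set f := μ[Y | coordSigma X Set.univ] with hf_def
  set g₁ := μ[Y | coordSigma X S₁] with hg₁_def
  set g₂ := μ[Y | coordSigma X S₂] with hg₂_def
  have hfm : Measurable[coordSigma X Set.univ] f := stronglyMeasurable_condExp.measurable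
  have hg₁m : Measurable[coordSigma X S₁] g₁ := stronglyMeasurable_condExp.measurable
  have hg₂m : Measurable[coordSigma X S₂] g₂ := stronglyMeasurable_condExp.measurable
  -- exceptional null set
  have hae : ∀ᵐ ω ∂μ, g₁ ω = f ω ∧ g₂ ω = f ω := h₁.and h₂
  set N := {ω | ¬ (g₁ ω = f ω ∧ g₂ ω = f ω)} with hN_def
  have hN : μ N = 0 := hae
  -- a representative in each atom, outside N
  have hpick : ∀ x : ∀ i, α i, ∃ ω, (∀ i, X i ω = x i) ∧ ω ∉ N := by
    intro x
    by_contra h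
    push_neg at h
    refine hpos x (le_antisymm ?_ zero_le)
    calc μ {ω | ∀ i, X i ω = x i} ≤ μ N := by
          refine measure_mono fun ω hω => h ω hω
      _ = 0 := hN
  choose w hw hwN using hpick
  set F : (∀ i, α i) → ℝ := fun x => f (w x) with hF_def
  have hfF : ∀ ω, f ω = F (fun i => X i ω) := by
    intro ω
    refine hconst Set.univ f hfm ω (w fun i => X i ω) fun i _ => ?_
    exact (hw (fun i => X i ω) i).symm
  have hF₁ : ∀ x x', (∀ i ∈ S₁, x i = x' i) → F x = F x' := by
    intro x x' h
    have e1 : f (w x) = g₁ (w x) := (not_not.mp fun hc => hwN x hc).1.symm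
    have e2 : f (w x') = g₁ (w x') := (not_not.mp fun hc => hwN x' hc).1.symm
    have e3 : g₁ (w x) = g₁ (w x') := by
      refine hconst S₁ g₁ hg₁m _ _ fun i hi => ?_
      rw [hw x i, hw x' i]; exact h i hi
    simp only [hF_def]; rw [e1, e3, ← e2]
  have hF₂ : ∀ x x', (∀ i ∈ S₂, x i = x' i) → F x = F x' := by
    intro x x' h
    have e1 : f (w x) = g₂ (w x) := (not_not.mp fun hc => hwN x hc).2.symm
    have e2 : f (w x') = g₂ (w x') := (not_not.mp fun hc => hwN x' hc).2.symm
    have e3 : g₂ (w x) = g₂ (w x') := by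
      refine hconst S₂ g₂ hg₂m _ _ fun i hi => ?_
      rw [hw x i, hw x' i]; exact h i hi
    simp only [hF_def]; rw [e1, e3, ← e2]
  have hF : ∀ x x', (∀ i ∈ S₁ ∩ S₂, x i = x' i) → F x = F x' := by
    intro x x' h
    set z : ∀ i, α i := fun i => if i ∈ S₁ then x i else x' i with hz
    have h1 : F x = F z := hF₁ x z fun i hi => by simp [hz, hi]
    have h2 : F z = F x' := by
      refine hF₂ z x' fun i hi => ?_
      by_cases hi1 : i ∈ S₁
      · simpa [hz, hi1] using h i ⟨hi1, hi⟩
      · simp [hz, hi1]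
    exact h1.trans h2
  -- f is constant on S₁ ∩ S₂ fibers
  have hconst' : ∀ ω ω', (∀ i ∈ S₁ ∩ S₂, X i ω = X i ω') → f ω = f ω' := by
    intro ω ω' h
    rw [hfF ω, hfF ω']
    exact hF _ _ fun i hi => h i hi
  -- hence f is measurable w.r.t. coordSigma X (S₁ ∩ S₂)
  have hfm12 : Measurable[coordSigma X (S₁ ∩ S₂)] f := by
    intro B hB
    refine ⟨(fun ω => fun i : ↥(S₁ ∩ S₂) => X i ω) '' (f ⁻¹' B), hTop _ _, ?_⟩
    ext ω
    constructor
    · rintro ⟨ω', hω', hTe⟩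
      have : f ω' = f ω := by
        refine hconst' ω' ω fun i hi => ?_
        exact congrFun hTe ⟨i, hi⟩
      exact Set.mem_preimage.mpr (this ▸ hω')
    · intro hω
      exact ⟨ω, hω, rfl⟩
  have h12le : coordSigma X (S₁ ∩ S₂) ≤ coordSigma X Set.univ := by
    intro s hs
    obtain ⟨C, -, hC⟩ := hs
    refine ⟨(fun (y : ∀ i : (Set.univ : Set (Fin d)), α i) =>
      fun i : ↥(S₁ ∩ S₂) => y ⟨i.1, Set.mem_univ _⟩) ⁻¹' C, hTop _ _, ?_⟩
    rw [← hC]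
    rfl
  have hfint : Integrable f μ := integrable_condExp
  have key : μ[f | coordSigma X (S₁ ∩ S₂)] = f :=
    condExp_of_stronglyMeasurable (hle _) hfm12.stronglyMeasurable hfint
  calc μ[Y | coordSigma X (S₁ ∩ S₂)]
      =ᵐ[μ] μ[f | coordSigma X (S₁ ∩ S₂)] :=
        (condExp_condExp_of_le h12le (hle Set.univ)).symm
    _ = f := key
end

section
/- Under the strictly positive density assumption (every joint configuration of finitely-valued features X has positive probability), there exists a unique minimal stable variable set D(Y) (a set S with E[Y|S] = E[Y|X] a.s. such that no proper subset has this property), and the collection of all stable variable sets is exactly {S ⊆ X : D(Y) ⊆ S}. -/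
open MeasureTheory

/-- `S` is a stable variable set for `Y`: `E[Y|S] = E[Y|X]` a.s. -/
def IsStableSet {Ω : Type*} [MeasurableSpace Ω] (μ : Measure Ω)
    {d : ℕ} {α : Fin d → Type*} [∀ i, MeasurableSpace (α i)]
    (X : ∀ i, Ω → α i) (Y : Ω → ℝ) (S : Set (Fin d)) : Prop :=
  μ[Y | coordSigma X S] =ᵐ[μ] μ[Y | coordSigma X Set.univ]

set_option linter.unusedSectionVars false
set_option linter.unusedVariables false

section aux
variable {Ω : Type*} {d : ℕ} {α : Fin d → Type*} [∀ i, MeasurableSpace (α i)]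
  (X : ∀ i, Ω → α i)

lemma coordSigma_mono {S T : Set (Fin d)} (hST : S ⊆ T) :
    coordSigma X S ≤ coordSigma X T := by
  have hr : Measurable (fun (v : ∀ i : T, α i) (i : S) => v ⟨i.1, hST i.2⟩) :=
    measurable_pi_lambda _ (fun i => measurable_pi_apply _)
  have heq : coordSigma X S =
      MeasurableSpace.comap (fun ω => fun i : T => X i ω)
        (MeasurableSpace.comap (fun (v : ∀ i : T, α i) (i : S) => v ⟨i.1, hST i.2⟩)
          MeasurableSpace.pi) := by
    rw [MeasurableSpace.comap_comp]; rfl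
  rw [heq]
  exact MeasurableSpace.comap_mono (measurable_iff_comap_le.mp hr)

lemma coordSigma_le [m0 : MeasurableSpace Ω] (hX : ∀ i, Measurable (X i)) (S : Set (Fin d)) :
    coordSigma X S ≤ m0 :=
  measurable_iff_comap_le.mp (measurable_pi_lambda _ fun i => hX i)

lemma eq_of_measurable_coordSigma {S : Set (Fin d)} {f : Ω → ℝ}
    (hf : Measurable[coordSigma X S] f) {ω ω' : Ω}
    (h : ∀ i ∈ S, X i ω = X i ω') : f ω = f ω' := by
  have hm : MeasurableSet[coordSigma X S] (f ⁻¹' {f ω}) :=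
    hf (measurableSet_singleton _)
  obtain ⟨t, -, ht⟩ := MeasurableSpace.measurableSet_comap.mp hm
  have hω : (fun i : S => X i ω) ∈ t := by
    have : ω ∈ f ⁻¹' {f ω} := rfl
    rw [← ht] at this; exact this
  have hee : (fun i : S => X i ω') = (fun i : S => X i ω) :=
    funext fun i => (h i i.2).symm
  have hω' : ω' ∈ (fun ω => fun i : S => X i ω) ⁻¹' t := by
    show (fun i : S => X i ω') ∈ t
    rw [hee]; exact hω
  rw [ht] at hω'
  exact hω'.symm

lemma measurable_coordSigma_of [∀ i, Fintype (α i)] [∀ i, MeasurableSingletonClass (α i)]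
    {S : Set (Fin d)} {f : Ω → ℝ}
    (h : ∀ ω ω', (∀ i ∈ S, X i ω = X i ω') → f ω = f ω') :
    Measurable[coordSigma X S] f := by
  intro B _
  refine MeasurableSpace.measurableSet_comap.mpr
    ⟨(fun ω => fun i : S => X i ω) '' (f ⁻¹' B), (Set.toFinite _).measurableSet, ?_⟩
  ext ω
  simp only [Set.mem_preimage, Set.mem_image]
  constructor
  · rintro ⟨ω', hω', he⟩
    have : f ω = f ω' := h ω ω' fun i hi => (congrFun he ⟨i, hi⟩).symm
    rw [this]; exact hω'
  · intro hω; exact ⟨ω, hω, rfl⟩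

end aux

section main
variable {Ω : Type*} [MeasurableSpace Ω] (μ : Measure Ω) [IsProbabilityMeasure μ]
  {d : ℕ} {α : Fin d → Type*} [∀ i, Fintype (α i)] [∀ i, MeasurableSpace (α i)]
  [∀ i, MeasurableSingletonClass (α i)]
  (X : ∀ i, Ω → α i) (Y : Ω → ℝ)

lemma isStable_superset (hX : ∀ i, Measurable (X i)) {D S : Set (Fin d)} (hD : IsStableSet μ X Y D) (hDS : D ⊆ S) :
    IsStableSet μ X Y S := by
  have h1 : μ[μ[Y|coordSigma X Set.univ] | coordSigma X S] =ᵐ[μ] μ[Y|coordSigma X S] :=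
    condExp_condExp_of_le (coordSigma_mono X (Set.subset_univ S)) (coordSigma_le X hX _)
  have h2 : μ[μ[Y|coordSigma X Set.univ] | coordSigma X S]
      =ᵐ[μ] μ[μ[Y|coordSigma X D] | coordSigma X S] := condExp_congr_ae hD.symm
  have h3 : μ[μ[Y|coordSigma X D] | coordSigma X S] = μ[Y|coordSigma X D] :=
    condExp_of_stronglyMeasurable (coordSigma_le X hX S)
      (stronglyMeasurable_condExp.mono (coordSigma_mono X hDS)) integrable_condExp
  calc μ[Y|coordSigma X S]
      =ᵐ[μ] μ[μ[Y|coordSigma X Set.univ]|coordSigma X S] := h1.symm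
    _ =ᵐ[μ] μ[μ[Y|coordSigma X D]|coordSigma X S] := h2
    _ = μ[Y|coordSigma X D] := h3
    _ =ᵐ[μ] μ[Y|coordSigma X Set.univ] := hD

lemma isStable_inter (hX : ∀ i, Measurable (X i)) (hpos : ∀ x : ∀ i, α i, μ {ω | ∀ i, X i ω = x i} ≠ 0)
    {S T : Set (Fin d)} (hS : IsStableSet μ X Y S) (hT : IsStableSet μ X Y T) :
    IsStableSet μ X Y (S ∩ T) := by
  classical
  set f := μ[Y | coordSigma X Set.univ] with hf
  have hfm : Measurable[coordSigma X Set.univ] f := stronglyMeasurable_condExp.measurable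
  have hSm : Measurable[coordSigma X S] (μ[Y|coordSigma X S]) :=
    stronglyMeasurable_condExp.measurable
  have hTm : Measurable[coordSigma X T] (μ[Y|coordSigma X T]) :=
    stronglyMeasurable_condExp.measurable
  have hae : ∀ᵐ ω ∂μ, (μ[Y|coordSigma X S]) ω = f ω ∧ (μ[Y|coordSigma X T]) ω = f ω := hS.and hT
  have key : ∀ x : ∀ i, α i, ∃ ω, (∀ i, X i ω = x i) ∧
      (μ[Y|coordSigma X S]) ω = f ω ∧ (μ[Y|coordSigma X T]) ω = f ω := by
    intro x
    by_contra hc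
    push_neg at hc
    apply hpos x
    refine measure_mono_null ?_ (ae_iff.mp hae)
    intro ω hω
    simp only [Set.mem_setOf_eq] at hω ⊢
    intro hgood
    exact hc ω hω hgood.1 hgood.2
  choose w hw1 hw2 hw3 using key
  have hconst : ∀ ω ω', (∀ i ∈ S ∩ T, X i ω = X i ω') → f ω = f ω' := by
    intro ω ω' hagree
    set x := fun i => X i ω with hx
    set y := fun i => X i ω' with hy
    set z := fun i => if i ∈ S then x i else y i with hz
    have e1 : f ω = f (w x) :=
      eq_of_measurable_coordSigma X hfm (fun i _ => (hw1 x i).symm)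
    have e2 : (μ[Y|coordSigma X S]) (w x) = (μ[Y|coordSigma X S]) (w z) := by
      refine eq_of_measurable_coordSigma X hSm (fun i hi => ?_)
      rw [hw1 x i, hw1 z i, hz]
      simp [hi]
    have e3 : (μ[Y|coordSigma X T]) (w z) = (μ[Y|coordSigma X T]) (w y) := by
      refine eq_of_measurable_coordSigma X hTm (fun i hi => ?_)
      rw [hw1 z i, hw1 y i, hz]
      by_cases hiS : i ∈ S
      · simp only [if_pos hiS]
        exact hagree i ⟨hiS, hi⟩
      · simp [hiS]
    have e4 : f (w y) = f ω' :=
      eq_of_measurable_coordSigma X hfm (fun i _ => hw1 y i)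
    calc f ω = f (w x) := e1
      _ = (μ[Y|coordSigma X S]) (w x) := (hw2 x).symm
      _ = (μ[Y|coordSigma X S]) (w z) := e2
      _ = f (w z) := hw2 z
      _ = (μ[Y|coordSigma X T]) (w z) := (hw3 z).symm
      _ = (μ[Y|coordSigma X T]) (w y) := e3
      _ = f (w y) := hw3 y
      _ = f ω' := e4
  have hfI : Measurable[coordSigma X (S ∩ T)] f := measurable_coordSigma_of X hconst
  have h1 : μ[f | coordSigma X (S ∩ T)] =ᵐ[μ] μ[Y | coordSigma X (S ∩ T)] :=
    condExp_condExp_of_le (coordSigma_mono X (Set.subset_univ _)) (coordSigma_le X hX _)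
  have h2 : μ[f | coordSigma X (S ∩ T)] = f :=
    condExp_of_stronglyMeasurable (coordSigma_le X hX _) hfI.stronglyMeasurable
      integrable_condExp
  show μ[Y|coordSigma X (S ∩ T)] =ᵐ[μ] f
  rw [← h2]
  exact h1.symm

end main


/-- Existence and uniqueness of the minimal stable variable set, and the
characterization of all stable variable sets as its supersets. -/
theorem stmt1 {Ω : Type*} [MeasurableSpace Ω] (μ : Measure Ω) [IsProbabilityMeasure μ]
    {d : ℕ} {α : Fin d → Type*} [∀ i, Fintype (α i)] [∀ i, MeasurableSpace (α i)]
    [∀ i, MeasurableSingletonClass (α i)]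
    (X : ∀ i, Ω → α i) (hX : ∀ i, Measurable (X i))
    (Y : Ω → ℝ) (hYm : Measurable Y) (hY : Integrable Y μ)
    (hpos : ∀ x : ∀ i, α i, μ {ω | ∀ i, X i ω = x i} ≠ 0) :
    ∃ D : Set (Fin d),
      (IsStableSet μ X Y D ∧ ∀ S : Set (Fin d), S ⊂ D → ¬ IsStableSet μ X Y S) ∧
      (∀ D' : Set (Fin d),
        (IsStableSet μ X Y D' ∧ ∀ S : Set (Fin d), S ⊂ D' → ¬ IsStableSet μ X Y S) → D' = D) ∧
      (∀ S : Set (Fin d), IsStableSet μ X Y S ↔ D ⊆ S) := by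
  classical
  set coll := {S : Set (Fin d) | IsStableSet μ X Y S} with hcoll
  set D := ⋂₀ coll with hDdef
  have huniv : IsStableSet μ X Y Set.univ := Filter.EventuallyEq.rfl
  have hinterall : ∀ 𝒮 : Set (Set (Fin d)), 𝒮.Finite →
      (∀ S ∈ 𝒮, IsStableSet μ X Y S) → IsStableSet μ X Y (Set.univ ∩ ⋂₀ 𝒮) := by
    intro 𝒮 hfin
    refine Set.Finite.induction_on (motive := fun 𝒮 _ =>
      (∀ S ∈ 𝒮, IsStableSet μ X Y S) → IsStableSet μ X Y (Set.univ ∩ ⋂₀ 𝒮)) 𝒮 hfin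
      (fun _ => by simpa using huniv) ?_
    intro a s ha hs ih hst
    have h1 : IsStableSet μ X Y a := hst _ (Set.mem_insert _ _)
    have h2 := ih (fun S hS => hst S (Set.mem_insert_of_mem _ hS))
    have heq : Set.univ ∩ ⋂₀ insert a s = a ∩ (Set.univ ∩ ⋂₀ s) := by
      rw [Set.sInter_insert]; ext i; simp
    rw [heq]
    exact isStable_inter μ X Y hX hpos h1 h2
  have hDstable : IsStableSet μ X Y D := by
    have := hinterall coll (Set.toFinite _) (fun S hS => hS)
    simpa [hDdef] using this
  refine ⟨D, ⟨hDstable, ?_⟩, ?_, ?_⟩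
  · intro S hSD hS
    exact hSD.not_subset (Set.sInter_subset_of_mem (show S ∈ coll from hS))
  · rintro D' ⟨hD'stable, hD'min⟩
    by_contra hne
    have hsub : D ⊆ D' := Set.sInter_subset_of_mem hD'stable
    exact hD'min D (hsub.ssubset_of_ne fun h => hne h.symm) hDstable
  · intro S
    constructor
    · intro hS
      exact Set.sInter_subset_of_mem hS
    · intro hDS
      exact isStable_superset μ X Y hX hDstable hDS
end

section
/- Under the strictly positive density assumption, the Markov boundary of Y (the unique minimal Markov blanket) exists and is unique, and the set of all Markov blankets of Y equals {S ⊆ X : MBd(Y) ⊆ S}, where MBd(Y) denotes the Markov boundary. -/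
open MeasureTheory
open scoped Classical ENNReal

/-- `S` is a Markov blanket of `Y` relative to the features `X`. -/
def MarkovBlanket {Ω : Type*} [MeasurableSpace Ω] (μ : Measure Ω)
    {d : ℕ} {α : Fin d → Type*} {β : Type*}
    (X : ∀ i, Ω → α i) (Y : Ω → β) (S : Set (Fin d)) : Prop :=
  ∀ (y : β) (x : ∀ i, α i),
    μ ({ω | Y ω = y} ∩ {ω | ∀ i, X i ω = x i}) * μ {ω | ∀ i ∈ S, X i ω = x i}
      = μ ({ω | Y ω = y} ∩ {ω | ∀ i ∈ S, X i ω = x i}) * μ {ω | ∀ i, X i ω = x i}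

section Aux

variable {Ω : Type*} [MeasurableSpace Ω] (μ : Measure Ω)
  {d : ℕ} {α : Fin d → Type*} {β : Type*}
  (X : ∀ i, Ω → α i) (Y : Ω → β)

/-- Cross-multiplied "the conditional distribution of Y given X depends only on
coordinates in S". -/
def MBDep (S : Set (Fin d)) : Prop :=
  ∀ (y : β) (x x' : ∀ i, α i), (∀ i ∈ S, x i = x' i) →
    μ ({ω | Y ω = y} ∩ {ω | ∀ i, X i ω = x i}) * μ {ω | ∀ i, X i ω = x' i}
      = μ ({ω | Y ω = y} ∩ {ω | ∀ i, X i ω = x' i}) * μ {ω | ∀ i, X i ω = x i}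

lemma mbdep_univ : MBDep μ X Y Set.univ := by
  intro y x x' h
  have : x = x' := funext fun i => h i (Set.mem_univ i)
  rw [this]

lemma mbdep_mono {S T : Set (Fin d)} (hST : S ⊆ T) (h : MBDep μ X Y S) :
    MBDep μ X Y T := fun y x x' hx => h y x x' fun i hi => hx i (hST hi)

lemma mbdep_inter {S T : Set (Fin d)}
    (hpos : ∀ x : ∀ i, α i, μ {ω | ∀ i, X i ω = x i} ≠ 0)
    (hfin : ∀ x : ∀ i, α i, μ {ω | ∀ i, X i ω = x i} ≠ ⊤)
    (hS : MBDep μ X Y S) (hT : MBDep μ X Y T) : MBDep μ X Y (S ∩ T) := by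
  intro y x x' hxx'
  set PY : (∀ i, α i) → ℝ≥0∞ := fun z => μ ({ω | Y ω = y} ∩ {ω | ∀ i, X i ω = z i}) with hPY
  set P : (∀ i, α i) → ℝ≥0∞ := fun z => μ {ω | ∀ i, X i ω = z i} with hP
  set x'' : ∀ i, α i := fun i => if i ∈ S then x i else x' i with hx''
  have h1 : PY x * P x'' = PY x'' * P x := hS y x x'' fun i hi => by simp [hx'', hi]
  have h2 : PY x'' * P x' = PY x' * P x'' := hT y x'' x' fun i hi => by
    by_cases hiS : i ∈ S
    · simpa [hx'', hiS] using hxx' i ⟨hiS, hi⟩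
    · simp [hx'', hiS]
  have key : PY x * P x' * P x'' = PY x' * P x * P x'' := by
    calc PY x * P x' * P x'' = PY x * P x'' * P x' := by ring
      _ = PY x'' * P x * P x' := by rw [h1]
      _ = PY x'' * P x' * P x := by ring
      _ = PY x' * P x'' * P x := by rw [h2]
      _ = PY x' * P x * P x'' := by ring
  exact (ENNReal.mul_left_inj (hpos x'') (hfin x'')).1 key

variable [∀ i, Fintype (α i)] [∀ i, MeasurableSpace (α i)]
  [∀ i, MeasurableSingletonClass (α i)] [MeasurableSpace β] [MeasurableSingletonClass β]

set_option linter.unusedSectionVars false in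
lemma mb_meas (hX : ∀ i, Measurable (X i)) (x : ∀ i, α i) :
    MeasurableSet {ω | ∀ i, X i ω = x i} := by
  have : {ω | ∀ i, X i ω = x i} = ⋂ i, (X i) ⁻¹' {x i} := by
    ext ω; simp [Set.mem_iInter]
  rw [this]
  exact MeasurableSet.iInter fun i => (hX i) (measurableSet_singleton _)

lemma mb_decomp (hX : ∀ i, Measurable (X i)) (E : Set Ω) (hE : MeasurableSet E)
    (S : Set (Fin d)) (x : ∀ i, α i) :
    μ (E ∩ {ω | ∀ i ∈ S, X i ω = x i})
      = ∑ x' ∈ Finset.univ.filter (fun x' : ∀ i, α i => ∀ i ∈ S, x' i = x i),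
          μ (E ∩ {ω | ∀ i, X i ω = x' i}) := by
  classical
  rw [← measure_biUnion_finset ?_ ?_]
  · congr 1
    ext ω
    simp only [Set.mem_iUnion, Finset.mem_coe, Finset.mem_filter, Finset.mem_univ, true_and,
      Set.mem_inter_iff, Set.mem_setOf_eq]
    constructor
    · rintro ⟨hEω, hS⟩
      exact ⟨fun i => X i ω, fun i hi => hS i hi, hEω, fun i => rfl⟩
    · rintro ⟨x', hx', hEω, hx⟩
      exact ⟨hEω, fun i hi => (hx i).trans (hx' i hi)⟩
  · intro a _ b _ hab
    refine Set.disjoint_left.2 fun ω hωa hωb => hab ?_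
    funext i
    exact (hωa.2 i).symm.trans (hωb.2 i)
  · intro b _
    exact hE.inter (mb_meas X hX b)

set_option linter.unusedSectionVars false in
lemma mb_of_dep (hX : ∀ i, Measurable (X i)) (hY : Measurable Y)
    {S : Set (Fin d)} (h : MBDep μ X Y S) : MarkovBlanket μ X Y S := by
  intro y x
  have hYm : MeasurableSet {ω | Y ω = y} := hY (measurableSet_singleton y)
  have hQY := mb_decomp μ X hX {ω | Y ω = y} hYm S x
  have hQ := mb_decomp μ X hX Set.univ MeasurableSet.univ S x
  simp only [Set.univ_inter] at hQ
  rw [hQY, hQ, Finset.mul_sum, Finset.sum_mul]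
  refine Finset.sum_congr rfl fun x' hx' => ?_
  have hag : ∀ i ∈ S, x' i = x i := (Finset.mem_filter.1 hx').2
  exact h y x x' fun i hi => (hag i hi).symm

set_option linter.unusedSectionVars false in
lemma dep_of_mb [IsFiniteMeasure μ]
    (hpos : ∀ x : ∀ i, α i, μ {ω | ∀ i, X i ω = x i} ≠ 0)
    {S : Set (Fin d)} (h : MarkovBlanket μ X Y S) : MBDep μ X Y S := by
  intro y x x' hxx'
  set PY : (∀ i, α i) → ℝ≥0∞ := fun z => μ ({ω | Y ω = y} ∩ {ω | ∀ i, X i ω = z i}) with hPY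
  set P : (∀ i, α i) → ℝ≥0∞ := fun z => μ {ω | ∀ i, X i ω = z i} with hP
  set Q : ℝ≥0∞ := μ {ω | ∀ i ∈ S, X i ω = x i} with hQdef
  set QY : ℝ≥0∞ := μ ({ω | Y ω = y} ∩ {ω | ∀ i ∈ S, X i ω = x i}) with hQYdef
  have hEv : {ω : Ω | ∀ i ∈ S, X i ω = x' i} = {ω | ∀ i ∈ S, X i ω = x i} := by
    ext ω
    exact forall₂_congr fun i hi => by rw [hxx' i hi]
  have h1 : PY x * Q = QY * P x := h y x
  have h2 : PY x' * Q = QY * P x' := by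
    have := h y x'
    rwa [hEv] at this
  have hsubset : {ω | ∀ i, X i ω = x i} ⊆ {ω | ∀ i ∈ S, X i ω = x i} :=
    fun ω hω i _ => hω i
  have hQ0 : Q ≠ 0 := fun h0 => hpos x (measure_mono_null hsubset h0)
  have hQt : Q ≠ ⊤ := measure_ne_top μ _
  apply (ENNReal.mul_left_inj hQ0 hQt).1
  calc PY x * P x' * Q = PY x * Q * P x' := by ring
    _ = QY * P x * P x' := by rw [h1]
    _ = QY * P x' * P x := by ring
    _ = PY x' * Q * P x := by rw [h2]
    _ = PY x' * P x * Q := by ring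

end Aux

/-- Existence and uniqueness of the Markov boundary under strictly positive density,
and the characterization of all Markov blankets as its supersets. -/
theorem stmt13 {Ω : Type*} [MeasurableSpace Ω] (μ : Measure Ω) [IsProbabilityMeasure μ]
    {d : ℕ} {α : Fin d → Type*} [∀ i, Fintype (α i)] [∀ i, MeasurableSpace (α i)]
    [∀ i, MeasurableSingletonClass (α i)]
    {β : Type*} [Fintype β] [MeasurableSpace β] [MeasurableSingletonClass β]
    (X : ∀ i, Ω → α i) (hX : ∀ i, Measurable (X i))
    (Y : Ω → β) (hY : Measurable Y)
    (hpos : ∀ x : ∀ i, α i, μ {ω | ∀ i, X i ω = x i} ≠ 0) :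
    ∃ M : Set (Fin d),
      (MarkovBlanket μ X Y M ∧ ∀ S : Set (Fin d), S ⊂ M → ¬ MarkovBlanket μ X Y S) ∧
      (∀ M' : Set (Fin d),
        (MarkovBlanket μ X Y M' ∧ ∀ S : Set (Fin d), S ⊂ M' → ¬ MarkovBlanket μ X Y S)
          → M' = M) ∧
      (∀ S : Set (Fin d), MarkovBlanket μ X Y S ↔ M ⊆ S) := by
  classical
  have hfin : ∀ x : ∀ i, α i, μ {ω | ∀ i, X i ω = x i} ≠ ⊤ := fun x => measure_ne_top μ _
  have hequiv : ∀ S : Set (Fin d), MarkovBlanket μ X Y S ↔ MBDep μ X Y S :=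
    fun S => ⟨dep_of_mb μ X Y hpos, mb_of_dep μ X Y hX hY⟩
  have hBuniv : MarkovBlanket μ X Y Set.univ := (hequiv _).2 (mbdep_univ μ X Y)
  obtain ⟨M, hM, hmin⟩ : ∃ M ∈ {S | MarkovBlanket μ X Y S}, ∀ S ∈ {S | MarkovBlanket μ X Y S},
      id S ≤ id M → id M = id S := by
    obtain ⟨M, hM, hm⟩ := Set.Finite.exists_minimalFor id {S | MarkovBlanket μ X Y S}
      (Set.toFinite _) ⟨Set.univ, hBuniv⟩
    exact ⟨M, hM, fun S hS hle => le_antisymm (hm hS hle) hle⟩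
  simp only [id] at hmin
  have hsub : ∀ S, MarkovBlanket μ X Y S → M ⊆ S := by
    intro S hS
    have hMS : MarkovBlanket μ X Y (M ∩ S) := (hequiv _).2
      (mbdep_inter μ X Y hpos hfin ((hequiv _).1 hM) ((hequiv _).1 hS))
    have hMeq : M = M ∩ S := hmin (M ∩ S) hMS Set.inter_subset_left
    rw [hMeq]
    exact Set.inter_subset_right
  refine ⟨M, ⟨hM, fun S hS hBS => hS.not_subset (hsub S hBS)⟩, ?_, fun S =>
    ⟨hsub S, fun hMS => (hequiv S).2 (mbdep_mono μ X Y hMS ((hequiv M).1 hM))⟩⟩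
  rintro M' ⟨hM', hmin'⟩
  have h1 : M ⊆ M' := hsub M' hM'
  by_contra hne
  exact hmin' M (h1.ssubset_of_ne fun h => hne h.symm) hM
end

section
/- Let X₁, X₂ be independent standard Gaussian random variables, f and g fixed measurable functions with g > 0, and Y = f(X₁) + g(X₂)·ε with ε a standard Gaussian independent of (X₁, X₂), all of appropriate integrability. Then E[Y | X₁, X₂] = E[Y | X₁] = f(X₁) almost surely, so {X₁} is a stable variable set of Y, while (if g is non-constant on a positive-measure set) Y is not conditionally independent of X₂ given X₁. -/
open MeasureTheory ProbabilityTheory Real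
open scoped NNReal ENNReal

noncomputable section


lemma aux_integral_gaussianReal (h : ℝ → ℝ) :
    ∫ x, h x ∂(gaussianReal 0 1) = ∫ x, gaussianPDFReal 0 1 x * h x := by
  rw [gaussianReal_of_var_ne_zero _ one_ne_zero]
  have h1 : gaussianPDF 0 1 = fun x => ((Real.toNNReal (gaussianPDFReal 0 1 x) : ℝ≥0) : ℝ≥0∞) :=
    rfl
  rw [h1, integral_withDensity_eq_integral_smul
    ((measurable_gaussianPDFReal 0 1).real_toNNReal) h]
  congr 1 with x
  simp [NNReal.smul_def, Real.coe_toNNReal _ (gaussianPDFReal_nonneg 0 1 x)]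

lemma aux_pdf01 (x : ℝ) : gaussianPDFReal 0 1 x = (√(2 * π))⁻¹ * rexp (-x ^ 2 / 2) := by
  simp [gaussianPDFReal]

lemma aux_integrable_bdd {α : Type*} [MeasurableSpace α] (μ : Measure α) [IsFiniteMeasure μ]
    {F : α → ℝ} (hm : AEStronglyMeasurable F μ) (C : ℝ) (h : ∀ x, |F x| ≤ C) :
    Integrable F μ :=
  (integrable_const C).mono' hm (ae_of_all _ (fun x => by simpa using h x))

lemma aux_cos_exp (c : ℝ) :
    ∫ x : ℝ, rexp (-x ^ 2 / 2) * Real.cos (c * x) = √(2 * π) * rexp (-c ^ 2 / 2) := by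
  have key := integral_cexp_quadratic (b := -(1/2 : ℂ)) (by norm_num) (c * Complex.I) 0
  have harg : ∀ x : ℝ, (-(1/2 : ℂ) * x ^ 2 + (c * Complex.I) * x + 0)
      = ((-x ^ 2 / 2 : ℝ) : ℂ) + ((c * x : ℝ) : ℂ) * Complex.I := by
    intro x; push_cast; ring
  have hre : ∀ x : ℝ, (Complex.exp (-(1/2 : ℂ) * x ^ 2 + (c * Complex.I) * x + 0)).re
      = rexp (-x ^ 2 / 2) * Real.cos (c * x) := by
    intro x; rw [harg, Complex.exp_re]; simp [← Complex.ofReal_pow]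
  have hint : Integrable (fun x : ℝ => Complex.exp (-(1/2 : ℂ) * x ^ 2 + (c * Complex.I) * x + 0))
      volume := integrable_cexp_quadratic (by norm_num) _ _
  have hL := integral_re hint
  simp only [RCLike.re_to_complex] at hL
  simp_rw [hre] at hL
  rw [hL, key]
  have e1 : ((π : ℂ) / - -(1/2 : ℂ)) = ((2 * π : ℝ) : ℂ) := by push_cast; ring
  have e2 : (0 - ((c : ℂ) * Complex.I) ^ 2 / (4 * -(1/2 : ℂ))) = ((-c ^ 2 / 2 : ℝ) : ℂ) := by
    rw [mul_pow, Complex.I_sq]; push_cast; ring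
  rw [e1, e2, ← Complex.ofReal_exp,
    show (1 / 2 : ℂ) = ((1 / 2 : ℝ) : ℂ) by norm_num,
    ← Complex.ofReal_cpow (by positivity), ← Complex.ofReal_mul, Complex.ofReal_re,
    Real.sqrt_eq_rpow]

lemma aux_gaussian_cos (c : ℝ) :
    ∫ x, Real.cos (c * x) ∂(gaussianReal 0 1) = rexp (-c ^ 2 / 2) := by
  rw [aux_integral_gaussianReal]
  simp_rw [aux_pdf01, mul_assoc]
  rw [integral_const_mul, aux_cos_exp, ← mul_assoc, inv_mul_cancel₀ (by positivity), one_mul]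

lemma aux_map_neg : (gaussianReal 0 1).map (fun x : ℝ => -x) = gaussianReal 0 1 := by
  have := gaussianReal_map_const_mul (μ := 0) (v := 1) (-1)
  simp only [neg_one_mul] at this
  convert this using 2
  · norm_num
  · ext; norm_num

lemma aux_gaussian_sin (c : ℝ) :
    ∫ x, Real.sin (c * x) ∂(gaussianReal 0 1) = 0 := by
  have h : ∫ x, Real.sin (c * x) ∂(gaussianReal 0 1)
      = ∫ x, Real.sin (c * x) ∂((gaussianReal 0 1).map (fun x : ℝ => -x)) := by
    rw [aux_map_neg]
  rw [integral_map measurable_neg.aemeasurable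
    ((by fun_prop : Measurable fun x : ℝ => Real.sin (c * x))).aestronglyMeasurable] at h
  simp only [mul_neg, Real.sin_neg] at h
  rw [integral_neg] at h
  linarith

lemma aux_gaussian_id : ∫ x, x ∂(gaussianReal 0 1) = 0 := by
  have h : ∫ x, x ∂(gaussianReal 0 1)
      = ∫ x, x ∂((gaussianReal 0 1).map (fun x : ℝ => -x)) := by rw [aux_map_neg]
  rw [integral_map measurable_neg.aemeasurable ((by fun_prop : Measurable fun x : ℝ => x)).aestronglyMeasurable] at h
  rw [integral_neg] at h
  linarith

lemma aux_gaussian_integrable_id : Integrable (fun x : ℝ => x) (gaussianReal 0 1) := by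
  rw [gaussianReal_of_var_ne_zero _ one_ne_zero,
    integrable_withDensity_iff (measurable_gaussianPDF 0 1)
      (ae_of_all _ fun x => ENNReal.ofReal_lt_top)]
  have h := (integrable_mul_cexp_neg_mul_sq (b := (1/2 : ℂ)) (by norm_num)).re
  refine (h.const_mul ((√(2 * π))⁻¹)).congr (ae_of_all _ fun x => ?_)
  have : (-(1/2 : ℂ) * x ^ 2) = ((-x ^ 2 / 2 : ℝ) : ℂ) := by push_cast; ring
  simp only [RCLike.re_to_complex, this, ← Complex.ofReal_exp, ← Complex.ofReal_mul,
    Complex.ofReal_re]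
  rw [gaussianPDF, ENNReal.toReal_ofReal (gaussianPDFReal_nonneg 0 1 x), aux_pdf01]
  ring

lemma aux_gaussian_cos_add (a s : ℝ) :
    ∫ x, Real.cos (a + s * x) ∂(gaussianReal 0 1) = Real.cos a * rexp (-s ^ 2 / 2) := by
  simp_rw [Real.cos_add]
  rw [integral_sub, integral_const_mul, integral_const_mul, aux_gaussian_cos, aux_gaussian_sin]
  · ring
  · exact aux_integrable_bdd _
      ((by fun_prop : Measurable fun x : ℝ => Real.cos a * Real.cos (s * x)).aestronglyMeasurable)
      1 (fun x => by
      have := abs_cos_le_one a; have := abs_cos_le_one (s * x)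
      calc |Real.cos a * Real.cos (s * x)| = |Real.cos a| * |Real.cos (s * x)| := abs_mul _ _
        _ ≤ 1 * 1 := by gcongr
        _ = 1 := one_mul 1)
  · exact aux_integrable_bdd _
      ((by fun_prop : Measurable fun x : ℝ => Real.sin a * Real.sin (s * x)).aestronglyMeasurable)
      1 (fun x => by
      have := abs_sin_le_one a; have := abs_sin_le_one (s * x)
      calc |Real.sin a * Real.sin (s * x)| = |Real.sin a| * |Real.sin (s * x)| := abs_mul _ _
        _ ≤ 1 * 1 := by gcongr
        _ = 1 := one_mul 1)


/-- With `Y = f(X₁) + g(X₂) ε` for independent standard Gaussians `X₁, X₂, ε` and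
`g > 0`: `E[Y | X₁, X₂] = E[Y | X₁] = f(X₁)` a.s., so `{X₁}` is a stable variable
set; yet if `g ∘ X₂` is not a.s. constant, `Y` is not conditionally independent of
`X₂` given `X₁`. -/
theorem stmt15 {Ω : Type*} [MeasurableSpace Ω] [StandardBorelSpace Ω]
    (μ : Measure Ω) [IsProbabilityMeasure μ]
    (X₁ X₂ e : Ω → ℝ) (hX₁ : Measurable X₁) (hX₂ : Measurable X₂) (he : Measurable e)
    (hlaw1 : μ.map X₁ = gaussianReal 0 1)
    (hlaw2 : μ.map X₂ = gaussianReal 0 1)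
    (hlawe : μ.map e = gaussianReal 0 1)
    (hindep : iIndepFun ![X₁, X₂, e] μ)
    (f g : ℝ → ℝ) (hf : Measurable f) (hg : Measurable g) (hgpos : ∀ x, 0 < g x)
    (Y : Ω → ℝ) (hYdef : Y = fun ω => f (X₁ ω) + g (X₂ ω) * e ω)
    (hYint : Integrable Y μ)
    (hfint : Integrable (fun ω => f (X₁ ω)) μ)
    (hgnc : ∀ c : ℝ, ¬ ((fun ω => g (X₂ ω)) =ᵐ[μ] fun _ => c)) :
    (μ[Y | MeasurableSpace.comap (fun ω => (X₁ ω, X₂ ω)) inferInstance]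
        =ᵐ[μ] fun ω => f (X₁ ω)) ∧
    (μ[Y | MeasurableSpace.comap X₁ inferInstance] =ᵐ[μ] fun ω => f (X₁ ω)) ∧
    ¬ CondIndepFun (MeasurableSpace.comap X₁ inferInstance) (hX₁.comap_le) Y X₂ μ := by
  have hXp : Measurable fun ω => (X₁ ω, X₂ ω) := hX₁.prodMk hX₂
  have hm2 : MeasurableSpace.comap (fun ω => (X₁ ω, X₂ ω)) inferInstance ≤ _ := hXp.comap_le
  have hm1 : MeasurableSpace.comap X₁ inferInstance ≤ _ := hX₁.comap_le
  have hmeas3 : ∀ i, Measurable (![X₁, X₂, e] i) := by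
    intro i; fin_cases i
    · exact hX₁
    · exact hX₂
    · exact he
  -- strongly measurable pieces
  have hSMf2 : StronglyMeasurable[MeasurableSpace.comap (fun ω => (X₁ ω, X₂ ω)) inferInstance]
      (fun ω => f (X₁ ω)) :=
    ((hf.comp measurable_fst).comp (comap_measurable _)).stronglyMeasurable
  have hSMg2 : StronglyMeasurable[MeasurableSpace.comap (fun ω => (X₁ ω, X₂ ω)) inferInstance]
      (fun ω => g (X₂ ω)) :=
    ((hg.comp measurable_snd).comp (comap_measurable _)).stronglyMeasurable
  have hSMf1 : StronglyMeasurable[MeasurableSpace.comap X₁ inferInstance]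
      (fun ω => f (X₁ ω)) :=
    (hf.comp (comap_measurable _)).stronglyMeasurable
  -- W
  set W : Ω → ℝ := (fun ω => g (X₂ ω)) * e with hWdef
  have hWeq : W = fun ω => Y ω - f (X₁ ω) := by
    funext ω; simp [hWdef, hYdef]
  have hWint : Integrable W μ := by rw [hWeq]; exact hYint.sub hfint
  have he_int : Integrable e μ := by
    have h1 : Integrable (fun x : ℝ => x) (μ.map e) := by
      rw [hlawe]; exact aux_gaussian_integrable_id
    exact (integrable_map_measure aestronglyMeasurable_id he.aemeasurable).mp h1
  have he_mean : ∫ ω, e ω ∂μ = 0 := by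
    have h0 : ∫ x, x ∂(μ.map e) = ∫ ω, e ω ∂μ :=
      integral_map he.aemeasurable aestronglyMeasurable_id
    rw [← h0, hlawe]; exact aux_gaussian_id
  -- independence of e and the pair σ-algebra
  have h12e : IndepFun (fun ω => (X₁ ω, X₂ ω)) e μ := by
    have := hindep.indepFun_prodMk hmeas3 0 1 2 (by decide) (by decide)
    simpa using this
  have hinde : Indep (MeasurableSpace.comap e inferInstance)
      (MeasurableSpace.comap (fun ω => (X₁ ω, X₂ ω)) inferInstance) μ := h12e.symm
  have hecond : μ[e|MeasurableSpace.comap (fun ω => (X₁ ω, X₂ ω)) inferInstance]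
      =ᵐ[μ] fun _ => 0 := by
    have h := condExp_indep_eq (μ := μ) he.comap_le hm2
      ((comap_measurable e).stronglyMeasurable) hinde
    rw [he_mean] at h
    exact h
  -- Part 1
  have hc1 : μ[fun ω => f (X₁ ω)|MeasurableSpace.comap (fun ω => (X₁ ω, X₂ ω)) inferInstance]
      = fun ω => f (X₁ ω) := condExp_of_stronglyMeasurable hm2 hSMf2 hfint
  have hc2 := condExp_mul_of_stronglyMeasurable_left (μ := μ) hSMg2 hWint he_int
  have part1 : μ[Y|MeasurableSpace.comap (fun ω => (X₁ ω, X₂ ω)) inferInstance]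
      =ᵐ[μ] fun ω => f (X₁ ω) := by
    have hYsplit : Y = (fun ω => f (X₁ ω)) + W := by
      funext ω; simp [hWdef, hYdef]
    have h := condExp_add (μ := μ)
      (m := MeasurableSpace.comap (fun ω => (X₁ ω, X₂ ω)) inferInstance) hfint hWint
    rw [← hYsplit, hc1] at h
    filter_upwards [h, hc2, hecond] with ω h1 h2 h3
    simp only [Pi.add_apply, Pi.mul_apply] at h1 h2 ⊢
    rw [h1, h2, h3, mul_zero, add_zero]
  refine ⟨part1, ?_, ?_⟩
  · -- Part 2
    have hle12 : MeasurableSpace.comap X₁ inferInstance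
        ≤ MeasurableSpace.comap (fun ω => (X₁ ω, X₂ ω)) inferInstance := by
      have h : MeasurableSpace.comap X₁ (inferInstance : MeasurableSpace ℝ)
          = MeasurableSpace.comap (fun ω => (X₁ ω, X₂ ω))
            (MeasurableSpace.comap Prod.fst inferInstance) := by
        rw [MeasurableSpace.comap_comp]; rfl
      rw [h]
      exact MeasurableSpace.comap_mono measurable_fst.comap_le
    calc μ[Y|MeasurableSpace.comap X₁ inferInstance]
        =ᵐ[μ] μ[μ[Y|MeasurableSpace.comap (fun ω => (X₁ ω, X₂ ω)) inferInstance]|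
          MeasurableSpace.comap X₁ inferInstance] := (condExp_condExp_of_le hle12 hm2).symm
      _ =ᵐ[μ] μ[fun ω => f (X₁ ω)|MeasurableSpace.comap X₁ inferInstance] :=
          condExp_congr_ae part1
      _ =ᵐ[μ] fun ω => f (X₁ ω) := by
          rw [condExp_of_stronglyMeasurable hm1 hSMf1 hfint]
  · -- Part 3
    intro hCI
    have hYmeas : Measurable Y := by
      rw [hYdef]; exact (hf.comp hX₁).add ((hg.comp hX₂).mul he)
    -- Step 1 : conditional independence implies (unconditional) independence of Y and X₂
    have hIndYX₂ : IndepFun Y X₂ μ := by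
      rw [condIndepFun_iff_condExp_inter_preimage_eq_mul hYmeas hX₂] at hCI
      rw [indepFun_iff_measure_inter_preimage_eq_mul]
      intro s t hs ht
      have h := hCI s t hs ht
      have hind21 : Indep (MeasurableSpace.comap X₂ inferInstance)
          (MeasurableSpace.comap X₁ inferInstance) μ := by
        have h21 : IndepFun X₂ X₁ μ := by
          have := hindep.indepFun (show (1 : Fin 3) ≠ 0 by decide)
          simpa using this
        exact h21
      have hX2cond : (μ⟦X₂ ⁻¹' t | MeasurableSpace.comap X₁ inferInstance⟧)
          =ᵐ[μ] fun _ => (μ (X₂ ⁻¹' t)).toReal := by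
        have hSM : StronglyMeasurable[MeasurableSpace.comap X₂ inferInstance]
            ((X₂ ⁻¹' t).indicator (fun _ => (1:ℝ))) :=
          stronglyMeasurable_const.indicator ⟨t, ht, rfl⟩
        have h2 := condExp_indep_eq (μ := μ) hX₂.comap_le hm1 hSM hind21
        rw [integral_indicator_const (1 : ℝ) (hX₂ ht)] at h2
        simpa [measureReal_def] using h2
      have e1 : ∫ ω, (μ⟦Y ⁻¹' s ∩ X₂ ⁻¹' t | MeasurableSpace.comap X₁ inferInstance⟧) ω ∂μ
          = (μ (Y ⁻¹' s ∩ X₂ ⁻¹' t)).toReal := by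
        rw [integral_condExp hm1, integral_indicator_const (1 : ℝ) ((hYmeas hs).inter (hX₂ ht))]
        simp [measureReal_def]
      have e2 : ∫ ω, (μ⟦Y ⁻¹' s | MeasurableSpace.comap X₁ inferInstance⟧) ω ∂μ
          = (μ (Y ⁻¹' s)).toReal := by
        rw [integral_condExp hm1, integral_indicator_const (1 : ℝ) (hYmeas hs)]
        simp [measureReal_def]
      have e3 : ∫ ω, (μ⟦Y ⁻¹' s ∩ X₂ ⁻¹' t | MeasurableSpace.comap X₁ inferInstance⟧) ω ∂μ
          = ∫ ω, (μ⟦Y ⁻¹' s | MeasurableSpace.comap X₁ inferInstance⟧) ω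
              * (μ (X₂ ⁻¹' t)).toReal ∂μ := by
        refine integral_congr_ae ?_
        filter_upwards [h, hX2cond] with ω h1 h2
        rw [h1, h2]
      rw [e3, integral_mul_const, e2] at e1
      have := e1.symm
      refine (ENNReal.toReal_eq_toReal_iff' (measure_ne_top μ _)
        (ENNReal.mul_ne_top (measure_ne_top μ _) (measure_ne_top μ _))).mp ?_
      rw [ENNReal.toReal_mul]
      exact e1.symm
    -- Step 2 : the joint law of (X₁, (X₂, e)) is a product of Gaussians
    have hmap2e : μ.map (fun ω => (X₂ ω, e ω))
        = (gaussianReal 0 1).prod (gaussianReal 0 1) := by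
      have h23 : IndepFun X₂ e μ := by
        have := hindep.indepFun (show (1 : Fin 3) ≠ 2 by decide)
        simpa using this
      exact ((indepFun_iff_map_prod_eq_prod_map_map hX₂.aemeasurable he.aemeasurable).mp
        h23).trans (by rw [hlaw2, hlawe])
    have hmap : μ.map (fun ω => (X₁ ω, (X₂ ω, e ω)))
        = (gaussianReal 0 1).prod ((gaussianReal 0 1).prod (gaussianReal 0 1)) := by
      have h123 : IndepFun X₁ (fun ω => (X₂ ω, e ω)) μ := by
        have := hindep.indepFun_prodMk hmeas3 1 2 0 (by decide) (by decide)
        have h' : IndepFun (fun ω => (X₂ ω, e ω)) X₁ μ := by simpa using this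
        exact h'.symm
      exact ((indepFun_iff_map_prod_eq_prod_map_map hX₁.aemeasurable
        (hX₂.prodMk he).aemeasurable).mp h123).trans (by rw [hlaw1, hmap2e])
    -- Step 3 : expectation formula
    have hexp : ∀ (t : ℝ) (ψ : ℝ → ℝ), Measurable ψ → (∀ x, |ψ x| ≤ 1) →
        ∫ ω, Real.cos (t * Y ω) * ψ (X₂ ω) ∂μ
          = (∫ a, Real.cos (t * f a) ∂(gaussianReal 0 1))
            * ∫ b, ψ b * rexp (-(g b ^ 2 * t ^ 2) / 2) ∂(gaussianReal 0 1) := by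
      intro t ψ hψ hψb
      set F : ℝ × (ℝ × ℝ) → ℝ :=
        fun p => Real.cos (t * (f p.1 + g p.2.1 * p.2.2)) * ψ p.2.1 with hF
      have hFmeas : Measurable F := by
        apply Measurable.mul
        · exact measurable_cos.comp (measurable_const.mul
            ((hf.comp measurable_fst).add
              ((hg.comp (measurable_fst.comp measurable_snd)).mul
                (measurable_snd.comp measurable_snd))))
        · exact hψ.comp (measurable_fst.comp measurable_snd)
      have hFbdd : ∀ p, |F p| ≤ 1 := by
        intro p
        rw [hF, abs_mul]
        calc |Real.cos _| * |ψ p.2.1| ≤ 1 * 1 := by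
              gcongr
              · exact abs_cos_le_one _
              · exact hψb _
          _ = 1 := one_mul 1
      have hstep : ∫ ω, Real.cos (t * Y ω) * ψ (X₂ ω) ∂μ
          = ∫ p, F p ∂((gaussianReal 0 1).prod ((gaussianReal 0 1).prod (gaussianReal 0 1))) := by
        rw [← hmap, integral_map (hX₁.prodMk (hX₂.prodMk he)).aemeasurable
          hFmeas.aestronglyMeasurable]
        refine integral_congr_ae (ae_of_all _ fun ω => ?_)
        simp [hF, hYdef]
      rw [hstep]
      have hFint : Integrable F
          ((gaussianReal 0 1).prod ((gaussianReal 0 1).prod (gaussianReal 0 1))) :=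
        aux_integrable_bdd _ hFmeas.aestronglyMeasurable 1 hFbdd
      rw [integral_prod _ hFint]
      have inner : ∀ a : ℝ, ∫ q, F (a, q) ∂((gaussianReal 0 1).prod (gaussianReal 0 1))
          = Real.cos (t * f a)
            * ∫ b, ψ b * rexp (-(g b ^ 2 * t ^ 2) / 2) ∂(gaussianReal 0 1) := by
        intro a
        have hGmeas : Measurable (fun q : ℝ × ℝ => F (a, q)) :=
          hFmeas.comp (measurable_const.prodMk measurable_id)
        have hGint : Integrable (fun q : ℝ × ℝ => F (a, q))
            ((gaussianReal 0 1).prod (gaussianReal 0 1)) :=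
          aux_integrable_bdd _ hGmeas.aestronglyMeasurable 1 (fun q => hFbdd (a, q))
        rw [integral_prod _ hGint]
        have hin2 : ∀ b : ℝ, (∫ c, F (a, (b, c)) ∂(gaussianReal 0 1))
            = Real.cos (t * f a) * (ψ b * rexp (-(g b ^ 2 * t ^ 2) / 2)) := by
          intro b
          have harg : ∀ c : ℝ, t * (f a + g b * c) = (t * f a) + (t * g b) * c := by
            intro c; ring
          simp only [hF]
          simp_rw [harg]
          rw [integral_mul_const, aux_gaussian_cos_add]
          have : -(t * g b) ^ 2 / 2 = -(g b ^ 2 * t ^ 2) / 2 := by ring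
          rw [this]; ring
        rw [integral_congr_ae (ae_of_all _ hin2), integral_const_mul]
      rw [integral_congr_ae (ae_of_all _ inner), integral_mul_const]
    -- Step 4 : choose t with positive cosine transform of f
    have hU : Filter.Tendsto (fun n : ℕ => ∫ a, Real.cos ((1 / (n + 1 : ℝ)) * f a)
        ∂(gaussianReal 0 1)) Filter.atTop (nhds 1) := by
      have h1 : (1 : ℝ) = ∫ _a, (1 : ℝ) ∂(gaussianReal 0 1) := by simp
      rw [h1]
      refine tendsto_integral_of_dominated_convergence (fun _ => (1 : ℝ))
        (fun n => (Measurable.aestronglyMeasurable (by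
          exact measurable_cos.comp (measurable_const.mul hf))))
        (integrable_const 1)
        (fun n => ae_of_all _ fun a => by
          simpa [Real.norm_eq_abs] using abs_cos_le_one ((1 / (n + 1 : ℝ)) * f a))
        (ae_of_all _ fun a => ?_)
      have h2 : Filter.Tendsto (fun n : ℕ => (1 / (n + 1 : ℝ)) * f a)
          Filter.atTop (nhds 0) := by
        simpa using tendsto_one_div_add_atTop_nhds_zero_nat.mul_const (f a)
      have h3 := (Real.continuous_cos.tendsto 0).comp h2
      simpa [Function.comp_def] using h3
    obtain ⟨n, hn⟩ := (hU.eventually (eventually_gt_nhds (by norm_num : (0:ℝ) < 1))).exists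
    set t : ℝ := 1 / (n + 1 : ℝ) with ht_def
    have ht0 : t ≠ 0 := by positivity
    -- abbreviations
    have hKmeas : Measurable (fun x : ℝ => rexp (-(g x ^ 2 * t ^ 2) / 2)) := by
      exact Real.measurable_exp.comp (((hg.pow_const 2).mul_const _).neg.div_const 2)
    have hKbdd : ∀ x : ℝ, |rexp (-(g x ^ 2 * t ^ 2) / 2)| ≤ 1 := by
      intro x
      rw [abs_of_pos (Real.exp_pos _)]
      have hle : -(g x ^ 2 * t ^ 2) / 2 ≤ 0 := by
        have : (0:ℝ) ≤ g x ^ 2 * t ^ 2 := by positivity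
        linarith
      calc rexp (-(g x ^ 2 * t ^ 2) / 2) ≤ rexp 0 := Real.exp_le_exp.mpr hle
        _ = 1 := Real.exp_zero
    have h_one := hexp t (fun _ => 1) measurable_const (fun x => by norm_num)
    simp only [mul_one, one_mul] at h_one
    have h_K := hexp t (fun x => rexp (-(g x ^ 2 * t ^ 2) / 2)) hKmeas hKbdd
    -- independence application
    have hφmeas : Measurable fun y : ℝ => Real.cos (t * y) :=
      measurable_cos.comp (measurable_const.mul measurable_id)
    have hIndcomp : IndepFun (fun ω => Real.cos (t * Y ω))
        (fun ω => rexp (-(g (X₂ ω) ^ 2 * t ^ 2) / 2)) μ := by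
      have := hIndYX₂.comp hφmeas hKmeas
      exact this
    have hint1 : Integrable (fun ω => Real.cos (t * Y ω)) μ :=
      aux_integrable_bdd _ ((hφmeas.comp hYmeas).aestronglyMeasurable) 1
        (fun ω => abs_cos_le_one _)
    have hint2 : Integrable (fun ω => rexp (-(g (X₂ ω) ^ 2 * t ^ 2) / 2)) μ :=
      aux_integrable_bdd _ ((hKmeas.comp hX₂).aestronglyMeasurable) 1 (fun ω => hKbdd _)
    have hmul : ∫ ω, Real.cos (t * Y ω) * rexp (-(g (X₂ ω) ^ 2 * t ^ 2) / 2) ∂μ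
        = (∫ ω, Real.cos (t * Y ω) ∂μ) * ∫ ω, rexp (-(g (X₂ ω) ^ 2 * t ^ 2) / 2) ∂μ :=
      hIndcomp.integral_fun_mul_eq_mul_integral hint1.1 hint2.1
    have hEK : ∫ ω, rexp (-(g (X₂ ω) ^ 2 * t ^ 2) / 2) ∂μ
        = ∫ b, rexp (-(g b ^ 2 * t ^ 2) / 2) ∂(gaussianReal 0 1) := by
      rw [← hlaw2]
      exact (integral_map hX₂.aemeasurable hKmeas.aestronglyMeasurable).symm
    rw [h_one, h_K, hEK, mul_assoc] at hmul
    -- cancel u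
    have hupos : (0:ℝ) < ∫ a, Real.cos (t * f a) ∂(gaussianReal 0 1) := hn
    have hI2 : ∫ b, rexp (-(g b ^ 2 * t ^ 2) / 2) * rexp (-(g b ^ 2 * t ^ 2) / 2)
          ∂(gaussianReal 0 1)
        = (∫ b, rexp (-(g b ^ 2 * t ^ 2) / 2) ∂(gaussianReal 0 1))
          * (∫ b, rexp (-(g b ^ 2 * t ^ 2) / 2) ∂(gaussianReal 0 1)) :=
      mul_left_cancel₀ (ne_of_gt hupos) hmul
    -- variance zero
    set k : ℝ := ∫ b, rexp (-(g b ^ 2 * t ^ 2) / 2) ∂(gaussianReal 0 1) with hk_def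
    have hKint : Integrable (fun b : ℝ => rexp (-(g b ^ 2 * t ^ 2) / 2)) (gaussianReal 0 1) :=
      aux_integrable_bdd _ hKmeas.aestronglyMeasurable 1 hKbdd
    have hK2int : Integrable
        (fun b : ℝ => rexp (-(g b ^ 2 * t ^ 2) / 2) * rexp (-(g b ^ 2 * t ^ 2) / 2))
        (gaussianReal 0 1) :=
      aux_integrable_bdd _ (hKmeas.mul hKmeas).aestronglyMeasurable 1
        (fun x => by rw [abs_mul]
                     calc |rexp _| * |rexp _| ≤ 1 * 1 := by gcongr <;> exact hKbdd x
                       _ = 1 := one_mul 1)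
    have hexpand : (fun b : ℝ => (rexp (-(g b ^ 2 * t ^ 2) / 2) - k) ^ 2)
        = fun b : ℝ => rexp (-(g b ^ 2 * t ^ 2) / 2) * rexp (-(g b ^ 2 * t ^ 2) / 2)
            - (2 * k) * rexp (-(g b ^ 2 * t ^ 2) / 2) + k ^ 2 := by
      funext b; ring
    have hsqint : Integrable (fun b : ℝ => (rexp (-(g b ^ 2 * t ^ 2) / 2) - k) ^ 2)
        (gaussianReal 0 1) := by
      rw [hexpand]
      exact (hK2int.sub (hKint.const_mul _)).add (integrable_const _)
    have hsq : ∫ b, (rexp (-(g b ^ 2 * t ^ 2) / 2) - k) ^ 2 ∂(gaussianReal 0 1) = 0 := by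
      have h0 : ∫ b, (rexp (-(g b ^ 2 * t ^ 2) / 2) - k) ^ 2 ∂(gaussianReal 0 1)
          = ∫ b, (rexp (-(g b ^ 2 * t ^ 2) / 2) * rexp (-(g b ^ 2 * t ^ 2) / 2)
              - (2 * k) * rexp (-(g b ^ 2 * t ^ 2) / 2) + k ^ 2) ∂(gaussianReal 0 1) := by
        rw [hexpand]
      have hBint : Integrable (fun b : ℝ => rexp (-(g b ^ 2 * t ^ 2) / 2)
          * rexp (-(g b ^ 2 * t ^ 2) / 2) - (2 * k) * rexp (-(g b ^ 2 * t ^ 2) / 2))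
          (gaussianReal 0 1) := by exact hK2int.sub (hKint.const_mul _)
      have hCint : Integrable (fun b : ℝ => (2 * k) * rexp (-(g b ^ 2 * t ^ 2) / 2))
          (gaussianReal 0 1) := by exact hKint.const_mul _
      rw [h0, integral_add hBint (integrable_const _),
        integral_sub hK2int hCint, integral_const_mul, integral_const]
      simp only [measure_univ, probReal_univ, ENNReal.toReal_one, smul_eq_mul, one_mul]
      rw [hI2, ← hk_def]
      ring
    have haez := (integral_eq_zero_iff_of_nonneg (fun b => sq_nonneg _) hsqint).mp hsq
    have hgconst : ∀ᵐ b ∂(gaussianReal 0 1), g b = Real.sqrt (-2 * Real.log k / t ^ 2) := by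
      filter_upwards [haez] with b hb
      have hb0 : (rexp (-(g b ^ 2 * t ^ 2) / 2) - k) ^ 2 = 0 := hb
      have hb' : rexp (-(g b ^ 2 * t ^ 2) / 2) = k := by
        have := pow_eq_zero_iff (n := 2) (by norm_num) |>.mp hb0
        linarith
      have hlogk : Real.log k = -(g b ^ 2 * t ^ 2) / 2 := by
        rw [← hb', Real.log_exp]
      have hgb2 : g b ^ 2 = -2 * Real.log k / t ^ 2 := by
        rw [hlogk]
        field_simp
      rw [← hgb2, Real.sqrt_sq (hgpos b).le]
    have hμae : (fun ω => g (X₂ ω)) =ᵐ[μ] fun _ => Real.sqrt (-2 * Real.log k / t ^ 2) := by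
      have h' : ∀ᵐ b ∂(μ.map X₂), g b = Real.sqrt (-2 * Real.log k / t ^ 2) := by
        rw [hlaw2]; exact hgconst
      exact (ae_map_iff hX₂.aemeasurable (hg (measurableSet_singleton _))).mp h'
    exact hgnc _ hμae

end
end

section
/- Under the covariate-shift assumption (P_te(Y|X) = P_tr(Y|X), same support) and the strictly positive density assumption, if S ⊆ X is a Markov blanket of Y under P_tr, then S is a Markov blanket of Y under P_te, and conversely; in particular the Markov boundary is the same under both distributions. -/
open MeasureTheory

section Aux

variable {Ω : Type*} [MeasurableSpace Ω]
  {d : ℕ} {α : Fin d → Type*} [∀ i, Fintype (α i)] [∀ i, MeasurableSpace (α i)]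
  [∀ i, MeasurableSingletonClass (α i)]
  {β : Type*} [MeasurableSpace β] [MeasurableSingletonClass β]

private lemma ennreal_cancel {a b c : ENNReal} (h0 : a ≠ 0) (ht : a ≠ ⊤)
    (h : a * b = a * c) : b = c := by
  have := congrArg (fun x => a⁻¹ * x) h
  simpa [← mul_assoc, ENNReal.inv_mul_cancel h0 ht] using this

/-- Transfer of block-constancy of conditionals from one measure to another. -/
private lemma transfer {p q p' q' P Q P' Q' : ENNReal}
    (hq : q ≠ 0) (hqt : q ≠ ⊤) (hq' : q' ≠ 0) (hq't : q' ≠ ⊤)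
    (h1 : P * q = p * Q) (h2 : P' * q' = p' * Q')
    (h : p * q' = p' * q) : P * Q' = P' * Q := by
  refine ennreal_cancel (a := q * q') (mul_ne_zero hq hq') (ENNReal.mul_ne_top hqt hq't) ?_
  calc (q * q') * (P * Q') = (P * q) * (Q' * q') := by ring
    _ = (p * Q) * (Q' * q') := by rw [h1]
    _ = (p * q') * (Q * Q') := by ring
    _ = (p' * q) * (Q * Q') := by rw [h]
    _ = (p' * Q') * (q * Q) := by ring
    _ = (P' * q') * (q * Q) := by rw [h2]
    _ = (q * q') * (P' * Q) := by ring

omit [∀ i, Fintype (α i)] in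
private lemma meas_cell (X : ∀ i, Ω → α i) (hX : ∀ i, Measurable (X i)) (x : ∀ i, α i) :
    MeasurableSet {ω | ∀ i, X i ω = x i} := by
  have : {ω | ∀ i, X i ω = x i} = ⋂ i, (X i) ⁻¹' {x i} := by
    ext ω; simp [Set.mem_iInter]
  rw [this]
  exact MeasurableSet.iInter fun i => (hX i) (measurableSet_singleton _)

open Classical in
/-- Decomposition of an `S`-block event into full cells. -/
private lemma decomp (μ : Measure Ω) (X : ∀ i, Ω → α i) (hX : ∀ i, Measurable (X i))
    (S : Set (Fin d)) (x : ∀ i, α i) (A : Set Ω) (hA : MeasurableSet A) :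
    μ (A ∩ {ω | ∀ i ∈ S, X i ω = x i})
      = ∑ x' ∈ Finset.univ.filter (fun x' : ∀ i, α i => ∀ i ∈ S, x' i = x i),
          μ (A ∩ {ω | ∀ i, X i ω = x' i}) := by
  have hset : A ∩ {ω | ∀ i ∈ S, X i ω = x i}
      = ⋃ x' ∈ Finset.univ.filter (fun x' : ∀ i, α i => ∀ i ∈ S, x' i = x i),
          (A ∩ {ω | ∀ i, X i ω = x' i}) := by
    ext ω
    simp only [Set.mem_inter_iff, Set.mem_setOf_eq, Set.mem_iUnion, Finset.mem_filter,
      Finset.mem_univ, true_and, exists_prop]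
    constructor
    · rintro ⟨hωA, hωS⟩
      exact ⟨fun i => X i ω, fun i hi => hωS i hi, hωA, fun i => rfl⟩
    · rintro ⟨x', hx', hωA, hω⟩
      exact ⟨hωA, fun i hi => (hω i).trans (hx' i hi)⟩
  rw [hset]
  refine measure_biUnion_finset ?_ ?_
  · intro x' _ x'' _ hne
    refine Set.disjoint_left.2 fun ω hω₁ hω₂ => hne ?_
    funext i
    exact (hω₁.2 i).symm.trans (hω₂.2 i)
  · exact fun x' _ => hA.inter (meas_cell X hX x')

open Classical in
/-- A Markov blanket is equivalent to constancy of the conditional on `S`-blocks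
(expressed multiplicatively). -/
private lemma blanket_iff (μ : Measure Ω) [IsProbabilityMeasure μ]
    (X : ∀ i, Ω → α i) (hX : ∀ i, Measurable (X i)) (Y : Ω → β) (hY : Measurable Y)
    (hpos : ∀ x : ∀ i, α i, μ {ω | ∀ i, X i ω = x i} ≠ 0) (S : Set (Fin d)) :
    MarkovBlanket μ X Y S ↔
      ∀ (y : β) (x x' : ∀ i, α i), (∀ i ∈ S, x' i = x i) →
        μ ({ω | Y ω = y} ∩ {ω | ∀ i, X i ω = x i}) * μ {ω | ∀ i, X i ω = x' i}
          = μ ({ω | Y ω = y} ∩ {ω | ∀ i, X i ω = x' i}) * μ {ω | ∀ i, X i ω = x i} := by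
  constructor
  · intro hMB y x x' hagree
    have hSeq : {ω | ∀ i ∈ S, X i ω = x' i} = {ω | ∀ i ∈ S, X i ω = x i} := by
      ext ω
      constructor
      · intro h i hi; exact (h i hi).trans (hagree i hi)
      · intro h i hi; exact (h i hi).trans (hagree i hi).symm
    have h1 := hMB y x
    have h2 := hMB y x'
    rw [hSeq] at h2
    set A := μ {ω | ∀ i ∈ S, X i ω = x i} with hA
    set B := μ ({ω | Y ω = y} ∩ {ω | ∀ i ∈ S, X i ω = x i}) with hB
    have hApos : A ≠ 0 := by
      intro h0
      refine hpos x (le_antisymm ?_ zero_le)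
      rw [← h0]
      exact measure_mono fun ω hω i _ => hω i
    have hAne : A ≠ ⊤ := measure_ne_top μ _
    refine ennreal_cancel hApos hAne ?_
    calc A * (μ ({ω | Y ω = y} ∩ {ω | ∀ i, X i ω = x i}) * μ {ω | ∀ i, X i ω = x' i})
        = (μ ({ω | Y ω = y} ∩ {ω | ∀ i, X i ω = x i}) * A) * μ {ω | ∀ i, X i ω = x' i} := by
          ring
      _ = (B * μ {ω | ∀ i, X i ω = x i}) * μ {ω | ∀ i, X i ω = x' i} := by rw [h1]
      _ = (B * μ {ω | ∀ i, X i ω = x' i}) * μ {ω | ∀ i, X i ω = x i} := by ring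
      _ = (μ ({ω | Y ω = y} ∩ {ω | ∀ i, X i ω = x' i}) * A) * μ {ω | ∀ i, X i ω = x i} := by
          rw [h2]
      _ = A * (μ ({ω | Y ω = y} ∩ {ω | ∀ i, X i ω = x' i}) * μ {ω | ∀ i, X i ω = x i}) := by
          ring
  · intro hconst y x
    have hA := decomp μ X hX S x Set.univ MeasurableSet.univ
    have hB := decomp μ X hX S x {ω | Y ω = y} (hY (measurableSet_singleton y))
    simp only [Set.univ_inter] at hA
    rw [hA, hB, Finset.mul_sum, Finset.sum_mul]
    refine Finset.sum_congr rfl fun x' hx' => ?_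
    exact hconst y x x' (Finset.mem_filter.mp hx').2

end Aux

/-- Under covariate shift (identical conditional law of `Y` given `X`, same strictly
positive support), the Markov blankets of `Y` coincide under the training and test
distributions; in particular, the Markov boundary is the same. -/
theorem stmt17 {Ω : Type*} [MeasurableSpace Ω] (μtr μte : Measure Ω)
    [IsProbabilityMeasure μtr] [IsProbabilityMeasure μte]
    {d : ℕ} {α : Fin d → Type*} [∀ i, Fintype (α i)] [∀ i, MeasurableSpace (α i)]
    [∀ i, MeasurableSingletonClass (α i)]
    {β : Type*} [Fintype β] [MeasurableSpace β] [MeasurableSingletonClass β]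
    (X : ∀ i, Ω → α i) (hX : ∀ i, Measurable (X i))
    (Y : Ω → β) (hY : Measurable Y)
    (hpos_tr : ∀ x : ∀ i, α i, μtr {ω | ∀ i, X i ω = x i} ≠ 0)
    (hpos_te : ∀ x : ∀ i, α i, μte {ω | ∀ i, X i ω = x i} ≠ 0)
    (hCS : ∀ (y : β) (x : ∀ i, α i),
      μte ({ω | Y ω = y} ∩ {ω | ∀ i, X i ω = x i}) * μtr {ω | ∀ i, X i ω = x i}
        = μtr ({ω | Y ω = y} ∩ {ω | ∀ i, X i ω = x i}) * μte {ω | ∀ i, X i ω = x i}) :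
    (∀ S : Set (Fin d), MarkovBlanket μtr X Y S ↔ MarkovBlanket μte X Y S) ∧
    (∀ M : Set (Fin d),
      (MarkovBlanket μtr X Y M ∧ ∀ S : Set (Fin d), S ⊂ M → ¬ MarkovBlanket μtr X Y S)
        ↔
      (MarkovBlanket μte X Y M ∧ ∀ S : Set (Fin d), S ⊂ M → ¬ MarkovBlanket μte X Y S)) := by
  have hmain : ∀ S : Set (Fin d), MarkovBlanket μtr X Y S ↔ MarkovBlanket μte X Y S := by
    intro S
    rw [blanket_iff μtr X hX Y hY hpos_tr S, blanket_iff μte X hX Y hY hpos_te S]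
    constructor
    · intro h y x x' hagree
      exact transfer (hpos_tr x) (measure_ne_top μtr _) (hpos_tr x') (measure_ne_top μtr _)
        (hCS y x) (hCS y x') (h y x x' hagree)
    · intro h y x x' hagree
      exact transfer (hpos_te x) (measure_ne_top μte _) (hpos_te x') (measure_ne_top μte _)
        (hCS y x).symm (hCS y x').symm (h y x x' hagree)
  refine ⟨hmain, fun M => ?_⟩
  exact and_congr (hmain M)
    (forall_congr' fun S => imp_congr Iff.rfl (not_congr (hmain S)))
end
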